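/- For every integer w ≥ 1 and every even integer n ≥ 0, the partition function of loops satisfies Z_{n,w}(1,2) = (2^{n}/(w+1)) · Σ_{k=0}^{2w+1} sin²((2k+1)π/(2w+2)) · cosⁿ((2k+1)π/(2w+2)). -/

import Mathlib

/-- A loop of length `n` in the slit of width `w`: a nearest-neighbour path of heights
`h 0, …, h n` with `h 0 = h n = 0` and all heights in `{0, …, w}` (enforced by taking
values in `Fin (w+1)`). -/
def IsLoop {n w : ℕ} (h : Fin (n + 1) → Fin (w + 1)) : Prop :=
  h 0 = 0 ∧ h (Fin.last n) = 0 ∧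
    ∀ i : Fin n, |((h i.succ : ℤ) - (h i.castSucc : ℤ))| = 1

instance {n w : ℕ} (h : Fin (n + 1) → Fin (w + 1)) : Decidable (IsLoop h) := by
  unfold IsLoop; infer_instance

/-- The partition function of loops,
`Z_{n,w}(a,b) = Σ_h a^{u(h)} b^{v(h)}`, where `u(h)` counts visits to the bottom wall
(excluding the zeroth vertex) and `v(h)` counts visits to the top wall. -/
noncomputable def Z (n w : ℕ) (a b : ℝ) : ℝ :=
  ∑ h : Fin (n + 1) → Fin (w + 1),
    if IsLoop h then
      a ^ (Finset.univ.filter fun i : Fin (n + 1) => i ≠ 0 ∧ (h i : ℕ) = 0).card *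
      b ^ (Finset.univ.filter fun i : Fin (n + 1) => (h i : ℕ) = w).card
    else 0

open Real Finset in
section


namespace ZOneTwoAux

noncomputable def ang (w k : ℕ) : ℝ := (2 * (k:ℝ) + 1) * Real.pi / (2 * (w:ℝ) + 2)

noncomputable def TM (w : ℕ) : Matrix (Fin (w+1)) (Fin (w+1)) ℝ :=
  fun x y => (if |((y:ℤ) - (x:ℤ))| = 1 then 1 else 0) * (if (y:ℕ) = w then 2 else 1)

lemma path_sum (w : ℕ) : ∀ (n : ℕ) (x : Fin (w+1)),
    (∑ h : Fin (n+1) → Fin (w+1),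
      (if h 0 = x ∧ h (Fin.last n) = 0 then ∏ i : Fin n, TM w (h i.castSucc) (h i.succ) else 0))
    = (TM w ^ n) x 0 := by
  intro n
  induction n with
  | zero =>
    intro x
    rw [pow_zero, Matrix.one_apply]
    rcases eq_or_ne x 0 with hx | hx
    · subst hx
      rw [if_pos rfl]
      rw [Finset.sum_eq_single (fun _ : Fin 1 => (0 : Fin (w+1)))]
      · simp
      · intro h _ hne
        rw [if_neg]
        rintro ⟨h1, -⟩
        exact hne (funext fun i => by rw [Subsingleton.elim i 0, h1])
      · simp
    · rw [if_neg hx, Finset.sum_eq_zero]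
      intro h _
      rw [if_neg]
      rintro ⟨h1, h2⟩
      exact hx (h1.symm.trans h2)
  | succ n ih =>
    intro x
    rw [← Equiv.sum_comp (Fin.consEquiv (fun _ => Fin (w+1))), Fintype.sum_prod_type]
    have key : ∀ (a : Fin (w+1)) (g : Fin (n+1) → Fin (w+1)),
        (if (Fin.consEquiv (fun _ => Fin (w+1))) (a, g) 0 = x ∧
            (Fin.consEquiv (fun _ => Fin (w+1))) (a, g) (Fin.last (n+1)) = 0 then
          ∏ i : Fin (n+1), TM w ((Fin.consEquiv (fun _ => Fin (w+1))) (a, g) i.castSucc)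
            ((Fin.consEquiv (fun _ => Fin (w+1))) (a, g) i.succ)
        else (0:ℝ)) =
        if a = x then
          (if g (Fin.last n) = 0 then TM w a (g 0) * ∏ i : Fin n, TM w (g i.castSucc) (g i.succ)
           else 0)
        else 0 := by
      intro a g
      have hc : (Fin.consEquiv (fun _ => Fin (w+1))) (a, g) = Fin.cons a g := rfl
      rw [hc]
      have hlast : (Fin.cons a g : Fin (n+2) → Fin (w+1)) (Fin.last (n+1)) = g (Fin.last n) := by
        rw [← Fin.succ_last, Fin.cons_succ]
      have hprod : (∏ i : Fin (n+1), TM w ((Fin.cons a g : Fin (n+2) → Fin (w+1)) i.castSucc)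
            ((Fin.cons a g : Fin (n+2) → Fin (w+1)) i.succ))
          = TM w a (g 0) * ∏ i : Fin n, TM w (g i.castSucc) (g i.succ) := by
        rw [Fin.prod_univ_succ]
        simp only [← Fin.succ_castSucc, Fin.cons_succ, Fin.castSucc_zero, Fin.cons_zero]
      rw [hlast, hprod, Fin.cons_zero, ite_and]
    rw [Finset.sum_congr rfl (fun a _ => Finset.sum_congr rfl (fun g _ => key a g)),
      Finset.sum_comm]
    have step2 : ∀ g : Fin (n+1) → Fin (w+1),
        (∑ a : Fin (w+1), if a = x then
          (if g (Fin.last n) = 0 then TM w a (g 0) * ∏ i : Fin n, TM w (g i.castSucc) (g i.succ)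
           else 0) else 0)
        = (if g (Fin.last n) = 0 then TM w x (g 0) * ∏ i : Fin n, TM w (g i.castSucc) (g i.succ)
           else 0) := by
      intro g
      rw [Finset.sum_ite_eq']
      simp
    rw [Finset.sum_congr rfl (fun g _ => step2 g)]
    have step3 : ∀ g : Fin (n+1) → Fin (w+1),
        (if g (Fin.last n) = 0 then TM w x (g 0) * ∏ i : Fin n, TM w (g i.castSucc) (g i.succ)
           else 0)
        = ∑ y : Fin (w+1), TM w x y *
            (if g 0 = y ∧ g (Fin.last n) = 0 then ∏ i : Fin n, TM w (g i.castSucc) (g i.succ)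
             else 0) := by
      intro g
      rw [Finset.sum_eq_single (g 0)]
      · split_ifs with h1 h2 h2 <;> simp_all
      · intro y _ hne
        rw [if_neg (fun hc => hne hc.1.symm), mul_zero]
      · simp
    rw [Finset.sum_congr rfl (fun g _ => step3 g), Finset.sum_comm, pow_succ',
      Matrix.mul_apply]
    apply Finset.sum_congr rfl
    intro y _
    rw [← Finset.mul_sum, ih y]

lemma Z_eq_pow (w n : ℕ) (hw : 1 ≤ w) : Z n w 1 2 = (TM w ^ n) 0 0 := by
  rw [← path_sum w n 0, Z]
  apply Finset.sum_congr rfl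
  intro h _
  by_cases hL : IsLoop h
  · rw [if_pos hL, if_pos ⟨hL.1, hL.2.1⟩, one_pow, one_mul]
    obtain ⟨h0, hlast, hstep⟩ := hL
    have hTM : ∀ i : Fin n, TM w (h i.castSucc) (h i.succ)
        = if ((h i.succ : ℕ) = w) then 2 else 1 := by
      intro i
      rw [TM, if_pos (hstep i), one_mul]
    rw [Finset.prod_congr rfl (fun i _ => hTM i)]
    have : (∏ i : Fin n, if ((h i.succ : ℕ) = w) then (2:ℝ) else 1)
        = ∏ i : Fin (n+1), if ((h i : ℕ) = w) then (2:ℝ) else 1 := by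
      rw [Fin.prod_univ_succ, h0]
      have : ((0 : Fin (w+1)) : ℕ) ≠ w := by
        simp only [Fin.val_zero]
        omega
      rw [if_neg this, one_mul]
    rw [this, Finset.prod_ite (fun _ => (2:ℝ)) (fun _ => (1:ℝ)),
      Finset.prod_const, Finset.prod_const, one_pow, mul_one]
  · rw [if_neg hL]
    by_cases hb : h 0 = 0 ∧ h (Fin.last n) = 0
    · rw [if_pos hb]
      have : ∃ i : Fin n, ¬ (|((h i.succ : ℤ) - (h i.castSucc : ℤ))| = 1) := by
        by_contra hcon
        push_neg at hcon
        exact hL ⟨hb.1, hb.2, hcon⟩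
      obtain ⟨i, hi⟩ := this
      rw [Finset.prod_eq_zero (Finset.mem_univ i)]
      rw [TM, if_neg hi, zero_mul]
    · rw [if_neg hb]

lemma cos_sum (w j : ℕ) (hj1 : 1 ≤ j) (hj2 : j ≤ 2*w+1) :
    ∑ k ∈ range (w+1), Real.cos ((j:ℝ) * ang w k) = 0 := by
  set β : ℝ := (j:ℝ) * Real.pi / (2 * (w:ℝ) + 2) with hβ
  have hden : (2 * (w:ℝ) + 2) ≠ 0 := by positivity
  have hβpos : 0 < β := by
    apply div_pos
    · positivity
    · positivity
  have hβlt : β < Real.pi := by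
    rw [hβ, div_lt_iff₀ (by positivity)]
    have : (j:ℝ) < 2 * (w:ℝ) + 2 := by
      have : (j:ℝ) ≤ 2*(w:ℝ)+1 := by exact_mod_cast hj2
      linarith
    nlinarith [Real.pi_pos]
  have hsin : Real.sin β ≠ 0 := ne_of_gt (Real.sin_pos_of_pos_of_lt_pi hβpos hβlt)
  have key : ∀ k : ℕ, Real.sin β * Real.cos ((j:ℝ) * ang w k)
      = (Real.sin (2*((k:ℝ)+1)*β) - Real.sin (2*(k:ℝ)*β)) / 2 := by
    intro k
    have h1 : (j:ℝ) * ang w k = (2*(k:ℝ)+1) * β := by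
      rw [ang, hβ]; ring
    have h2 : 2*((k:ℝ)+1)*β = (2*(k:ℝ)+1)*β + β := by ring
    have h3 : 2*(k:ℝ)*β = (2*(k:ℝ)+1)*β - β := by ring
    rw [h1, h2, h3, Real.sin_add, Real.sin_sub]
    ring
  have hmul : Real.sin β * ∑ k ∈ range (w+1), Real.cos ((j:ℝ) * ang w k) = 0 := by
    rw [Finset.mul_sum]
    rw [Finset.sum_congr rfl (fun k _ => key k)]
    have : ∀ k : ℕ, (Real.sin (2*((k:ℝ)+1)*β) - Real.sin (2*(k:ℝ)*β)) / 2
        = ((fun m : ℕ => Real.sin (2*(m:ℝ)*β) / 2) (k+1)) - ((fun m : ℕ => Real.sin (2*(m:ℝ)*β) / 2) k) := by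
      intro k
      push_cast
      ring
    rw [Finset.sum_congr rfl (fun k _ => this k),
      Finset.sum_range_sub (fun m : ℕ => Real.sin (2*(m:ℝ)*β) / 2) (w+1)]
    have h4 : 2*(((w:ℝ)+1))*β = (j:ℝ) * Real.pi := by
      rw [hβ]
      field_simp
    have : 2*(((w+1:ℕ)):ℝ)*β = (j:ℝ)*Real.pi := by push_cast; push_cast at h4; linarith [h4]
    rw [this, Real.sin_nat_mul_pi]
    norm_num
  exact (mul_eq_zero.mp hmul).resolve_left hsin

lemma cos_sum_zero (w : ℕ) : ∑ k ∈ range (w+1), Real.cos ((0:ℝ) * ang w k) = (w:ℝ)+1 := by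
  simp [Finset.sum_const]

lemma sin_sin_sum (w x : ℕ) (hw : 1 ≤ w) (hx : x ≤ w) :
    ∑ k ∈ range (w+1), Real.sin (ang w k) * Real.sin (((x:ℝ)+1) * ang w k)
    = if x = 0 then ((w:ℝ)+1)/2 else 0 := by
  have key : ∀ k : ℕ, Real.sin (ang w k) * Real.sin (((x:ℝ)+1) * ang w k)
      = (Real.cos ((x:ℝ) * ang w k) - Real.cos (((x:ℝ)+2) * ang w k)) / 2 := by
    intro k
    have h1 : (x:ℝ) * ang w k = ((x:ℝ)+1) * ang w k - ang w k := by ring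
    have h2 : ((x:ℝ)+2) * ang w k = ((x:ℝ)+1) * ang w k + ang w k := by ring
    rw [h1, h2, Real.cos_sub, Real.cos_add]
    ring
  rw [Finset.sum_congr rfl (fun k _ => key k), ← Finset.sum_div, Finset.sum_sub_distrib]
  have hx2 : ∑ k ∈ range (w+1), Real.cos (((x:ℝ)+2) * ang w k) = 0 := by
    have := cos_sum w (x+2) (by omega) (by omega)
    push_cast at this
    convert this using 2
  rcases Nat.eq_zero_or_pos x with h0 | hpos
  · subst h0
    rw [if_pos rfl, hx2]
    push_cast
    rw [cos_sum_zero w]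
    ring
  · rw [if_neg (by omega), hx2, cos_sum w x (by omega) (by omega)]
    ring

noncomputable def ev (w : ℕ) (θ : ℝ) : Fin (w+1) → ℝ :=
  fun x => Real.sin ((((x:ℕ):ℝ) + 1) * θ) * (if (x:ℕ) = w then 1/2 else 1)


lemma eig (w : ℕ) (hw : 1 ≤ w) (θ : ℝ) (hθ : Real.cos (((w:ℝ)+1) * θ) = 0) :
    (TM w).mulVec (ev w θ) = (2 * Real.cos θ) • (ev w θ) := by
  funext x
  rw [Matrix.mulVec, dotProduct]
  have step1 : ∀ y : Fin (w+1), TM w x y * ev w θ y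
      = if |(((y:ℕ):ℤ) - ((x:ℕ):ℤ))| = 1 then Real.sin ((((y:ℕ):ℝ) + 1) * θ) else 0 := by
    intro y
    show ((if |((y:ℤ) - (x:ℤ))| = 1 then (1:ℝ) else 0) * (if (y:ℕ) = w then 2 else 1)) *
      (Real.sin ((((y:ℕ):ℝ) + 1) * θ) * (if (y:ℕ) = w then 1/2 else 1)) = _
    split_ifs <;> ring
  rw [Finset.sum_congr rfl (fun y _ => step1 y)]
  rw [Fin.sum_univ_eq_sum_range
    (fun m => if |((m:ℤ) - ((x:ℕ):ℤ))| = 1 then Real.sin (((m:ℝ) + 1) * θ) else 0) (w+1)]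
  have step2 : ∀ m ∈ range (w+1),
      (if |((m:ℤ) - ((x:ℕ):ℤ))| = 1 then Real.sin (((m:ℝ) + 1) * θ) else 0)
      = (if m + 1 = (x:ℕ) then Real.sin (((m:ℝ) + 1) * θ) else 0)
        + (if m = (x:ℕ) + 1 then Real.sin (((m:ℝ) + 1) * θ) else 0) := by
    intro m _
    have habs : |((m:ℤ) - ((x:ℕ):ℤ))| = 1 ↔ (m + 1 = (x:ℕ) ∨ m = (x:ℕ) + 1) := by
      rw [abs_eq (by norm_num : (0:ℤ) ≤ 1)]
      omega
    simp only [habs]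
    split_ifs <;> (first | (exfalso; omega) | ring)
  rw [Finset.sum_congr rfl step2, Finset.sum_add_distrib]
  have hsum1 : (∑ m ∈ range (w+1), if m + 1 = (x:ℕ) then Real.sin (((m:ℝ) + 1) * θ) else 0)
      = Real.sin (((x:ℕ):ℝ) * θ) := by
    cases hx : (x:ℕ) with
    | zero =>
      rw [Finset.sum_eq_zero (fun m _ => if_neg (by omega))]
      norm_num
    | succ k =>
      have : ∀ m ∈ range (w+1), (if m + 1 = k + 1 then Real.sin (((m:ℝ) + 1) * θ) else 0)
          = (if m = k then Real.sin (((m:ℝ) + 1) * θ) else 0) :=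
        fun m _ => if_congr (by constructor <;> omega) rfl rfl
      rw [Finset.sum_congr rfl this, Finset.sum_ite_eq' (range (w+1)) k
        (fun m => Real.sin (((m:ℝ) + 1) * θ)),
        if_pos (Finset.mem_range.mpr (by have := x.isLt; omega))]
      push_cast
      ring_nf
  have hsum2 : (∑ m ∈ range (w+1), if m = (x:ℕ) + 1 then Real.sin (((m:ℝ) + 1) * θ) else 0)
      = if (x:ℕ) = w then 0 else Real.sin ((((x:ℕ):ℝ) + 2) * θ) := by
    rw [Finset.sum_ite_eq' (range (w+1)) ((x:ℕ)+1)
      (fun m => Real.sin (((m:ℝ) + 1) * θ))]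
    rcases eq_or_ne ((x:ℕ)) w with hxw | hxw
    · rw [if_neg (by simp [hxw]), if_pos hxw]
    · rw [if_pos (Finset.mem_range.mpr (by have := x.isLt; omega)), if_neg hxw]
      push_cast
      ring_nf
  rw [hsum1, hsum2]
  show _ = (2 * Real.cos θ) * ev w θ x
  rcases eq_or_ne ((x:ℕ)) w with hxw | hxw
  · rw [if_pos hxw]
    show _ + _ = (2 * Real.cos θ) * (Real.sin ((((x:ℕ):ℝ) + 1) * θ) * (if (x:ℕ) = w then 1/2 else 1))
    rw [if_pos hxw, hxw]
    have h1 : (w:ℝ) * θ = ((w:ℝ)+1) * θ - θ := by ring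
    rw [h1, Real.sin_sub, hθ]
    ring
  · rw [if_neg hxw]
    show _ + _ = (2 * Real.cos θ) * (Real.sin ((((x:ℕ):ℝ) + 1) * θ) * (if (x:ℕ) = w then 1/2 else 1))
    rw [if_neg hxw]
    have h1 : ((x:ℕ):ℝ) * θ = (((x:ℕ):ℝ)+1) * θ - θ := by ring
    have h2 : (((x:ℕ):ℝ) + 2) * θ = (((x:ℕ):ℝ)+1) * θ + θ := by ring
    rw [h1, h2, Real.sin_sub, Real.sin_add]
    ring

lemma pow_eig (w : ℕ) (hw : 1 ≤ w) (θ : ℝ) (hθ : Real.cos (((w:ℝ)+1) * θ) = 0) (n : ℕ) :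
    (TM w ^ n).mulVec (ev w θ) = ((2 * Real.cos θ)^n) • (ev w θ) := by
  induction n with
  | zero => simp [Matrix.one_mulVec]
  | succ n ih =>
    rw [pow_succ, ← Matrix.mulVec_mulVec, eig w hw θ hθ, Matrix.mulVec_smul, ih,
      smul_smul, ← pow_succ']

lemma cos_ang_half (w k : ℕ) : Real.cos (((w:ℝ)+1) * ang w k) = 0 := by
  rw [Real.cos_eq_zero_iff]
  refine ⟨(k:ℤ), ?_⟩
  rw [ang]
  have h : (2*(w:ℝ)+2) ≠ 0 := by positivity
  field_simp
  simp

lemma decomp (w : ℕ) (hw : 1 ≤ w) (x : Fin (w+1)) :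
    ∑ k ∈ range (w+1), ((2/((w:ℝ)+1)) * Real.sin (ang w k)) * ev w (ang w k) x
    = if x = (0 : Fin (w+1)) then 1 else 0 := by
  have hterm : ∀ k : ℕ, ((2/((w:ℝ)+1)) * Real.sin (ang w k)) * ev w (ang w k) x
      = ((2/((w:ℝ)+1)) * (if (x:ℕ) = w then 1/2 else 1)) *
        (Real.sin (ang w k) * Real.sin ((((x:ℕ):ℝ)+1) * ang w k)) := by
    intro k
    simp only [ev]
    ring
  rw [Finset.sum_congr rfl (fun k _ => hterm k), ← Finset.mul_sum,
    sin_sin_sum w (x:ℕ) hw (by have := x.isLt; omega)]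
  have hx0 : (x = (0:Fin (w+1))) ↔ ((x:ℕ) = 0) := by
    rw [Fin.ext_iff]
    simp
  rcases eq_or_ne ((x:ℕ)) 0 with h0 | h0
  · rw [if_pos h0, if_pos (hx0.mpr h0), if_neg (by omega)]
    have hne : (w:ℝ) + 1 ≠ 0 := by positivity
    field_simp
  · rw [if_neg h0, if_neg (fun hc => h0 (hx0.mp hc)), mul_zero]

lemma spectral (w n : ℕ) (hw : 1 ≤ w) (hn : Even n) :
    (TM w ^ n) 0 0 = 2 ^ n / ((w : ℝ) + 1) *
      ∑ k ∈ Finset.range (2 * w + 2),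
        Real.sin ((2 * (k : ℝ) + 1) * Real.pi / (2 * (w : ℝ) + 2)) ^ 2 *
          Real.cos ((2 * (k : ℝ) + 1) * Real.pi / (2 * (w : ℝ) + 2)) ^ n := by
  have e1 : (TM w ^ n) 0 0
      = ∑ y : Fin (w+1), (TM w ^ n) 0 y * (if y = (0:Fin (w+1)) then 1 else 0) := by
    rw [Finset.sum_congr rfl (fun y _ => by rw [mul_ite, mul_one, mul_zero]),
      Finset.sum_ite_eq' Finset.univ (0:Fin (w+1)) (fun y => (TM w ^ n) 0 y),
      if_pos (Finset.mem_univ _)]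
  rw [e1, Finset.sum_congr rfl (fun y _ => by rw [← decomp w hw y]),
    Finset.sum_congr rfl (fun y _ => Finset.mul_sum _ _ _), Finset.sum_comm]
  have e2 : ∀ k : ℕ,
      (∑ y : Fin (w+1), (TM w ^ n) 0 y * ((2/((w:ℝ)+1) * Real.sin (ang w k)) * ev w (ang w k) y))
      = (2/((w:ℝ)+1) * Real.sin (ang w k)) * ((2*Real.cos (ang w k))^n * Real.sin (ang w k)) := by
    intro k
    have hlin : (∑ y : Fin (w+1), (TM w ^ n) 0 y *
        ((2/((w:ℝ)+1) * Real.sin (ang w k)) * ev w (ang w k) y))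
        = (2/((w:ℝ)+1) * Real.sin (ang w k)) * ((TM w ^ n).mulVec (ev w (ang w k)) 0) := by
      rw [Matrix.mulVec, dotProduct, Finset.mul_sum]
      apply Finset.sum_congr rfl
      intro y _
      ring
    rw [hlin, pow_eig w hw _ (cos_ang_half w k) n]
    have hev0 : ev w (ang w k) (0 : Fin (w+1)) = Real.sin (ang w k) := by
      have h0w : ((0 : Fin (w+1)) : ℕ) ≠ w := by simp only [Fin.val_zero]; omega
      simp only [ev, if_neg h0w]
      norm_num
    rw [Pi.smul_apply, smul_eq_mul, hev0]
  rw [Finset.sum_congr rfl (fun k _ => e2 k)]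
  have hang : ∀ k : ℕ, (2 * (k : ℝ) + 1) * Real.pi / (2 * (w : ℝ) + 2) = ang w k := fun k => rfl
  rw [Finset.sum_congr rfl (fun k (_ : k ∈ range (2*w+2)) => by rw [hang k]),
    show 2*w+2 = (w+1)+(w+1) from by ring,
    Finset.sum_range_add (fun k => Real.sin (ang w k) ^ 2 * Real.cos (ang w k) ^ n) (w+1) (w+1)]
  have hshift : ∀ k : ℕ, ang w ((w+1)+k) = ang w k + Real.pi := by
    intro k
    rw [ang, ang]
    have h : (2*(w:ℝ)+2) ≠ 0 := by positivity
    push_cast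
    field_simp
    ring
  have hsym : ∀ k : ℕ, Real.sin (ang w ((w+1)+k)) ^ 2 * Real.cos (ang w ((w+1)+k)) ^ n
      = Real.sin (ang w k) ^ 2 * Real.cos (ang w k) ^ n := by
    intro k
    rw [hshift k, Real.sin_antiperiodic (ang w k), Real.cos_antiperiodic (ang w k),
      neg_sq, hn.neg_pow]
  rw [Finset.sum_congr rfl (fun k _ => hsym k), ← Finset.sum_add_distrib, Finset.mul_sum]
  apply Finset.sum_congr rfl
  intro k _
  rw [mul_pow]
  ring

end ZOneTwoAux

end

/-- exact expression for `Z_{n,w}(1,2)` for even `n`. -/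
theorem Z_one_two (w n : ℕ) (hw : 1 ≤ w) (hn : Even n) :
    Z n w 1 2 = 2 ^ n / ((w : ℝ) + 1) *
      ∑ k ∈ Finset.range (2 * w + 2),
        Real.sin ((2 * (k : ℝ) + 1) * Real.pi / (2 * (w : ℝ) + 2)) ^ 2 *
          Real.cos ((2 * (k : ℝ) + 1) * Real.pi / (2 * (w : ℝ) + 2)) ^ n := by
  rw [ZOneTwoAux.Z_eq_pow w n hw]
  exact ZOneTwoAux.spectral w n hw hn
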